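/- For 0 ≤ p ≤ 1/3 and 0 ≤ s ≤ 1/3, setting u₂(p,s) = p·(1-3s)/(1-s) and u₃(p,s) = p·(1-3p)·(1-3s)/((1-p)·(1-s)) + 2s²/(1-s), the equation u₂(p,s) = u₃(p,s) is solved in s by ŝ(p) = (-3p² + √(4p² - 4p³ + 9p⁴))/(2(1-p)). -/
import Mathlib


noncomputable def u₂ (p s : ℝ) : ℝ := p * (1 - 3 * s) / (1 - s)

noncomputable def u₃ (p s : ℝ) : ℝ :=
  p * (1 - 3 * p) * (1 - 3 * s) / ((1 - p) * (1 - s)) + 2 * s ^ 2 / (1 - s)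

noncomputable def sHat (p : ℝ) : ℝ :=
  (-3 * p ^ 2 + Real.sqrt (4 * p ^ 2 - 4 * p ^ 3 + 9 * p ^ 4)) / (2 * (1 - p))

theorem stmt_10 (p : ℝ) (hp0 : 0 ≤ p) (hp1 : p ≤ 1 / 3) :
    sHat p ∈ Set.Icc (0 : ℝ) (1 / 3) ∧ u₂ p (sHat p) = u₃ p (sHat p) := by
  have hp : p < 1 := lt_of_le_of_lt hp1 (by norm_num)
  have hpne : (1 : ℝ) - p ≠ 0 := by linarith
  set q := Real.sqrt (4 * p ^ 2 - 4 * p ^ 3 + 9 * p ^ 4) with hqdef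
  have hA : (0 : ℝ) ≤ 4 * p ^ 2 - 4 * p ^ 3 + 9 * p ^ 4 := by nlinarith
  have hq0 : 0 ≤ q := Real.sqrt_nonneg _
  have hq2 : q ^ 2 = 4 * p ^ 2 - 4 * p ^ 3 + 9 * p ^ 4 := Real.sq_sqrt hA
  have hqge : 3 * p ^ 2 ≤ q := by nlinarith
  have hqle : q ≤ 2 / 3 * (1 - p) + 3 * p ^ 2 := by nlinarith
  have hs : sHat p = (-3 * p ^ 2 + q) / (2 * (1 - p)) := rfl
  have hden : (0 : ℝ) < 2 * (1 - p) := by linarith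
  have hs0 : 0 ≤ sHat p := by
    rw [hs]; apply div_nonneg (by linarith) (le_of_lt hden)
  have hs3 : sHat p ≤ 1 / 3 := by
    rw [hs, div_le_iff₀ hden]; linarith
  have h1s : (1 : ℝ) - sHat p ≠ 0 := by
    have : sHat p < 1 := lt_of_le_of_lt hs3 (by norm_num)
    linarith
  -- key identity
  have hkey : (1 - p) * sHat p ^ 2 + 3 * p ^ 2 * sHat p - p ^ 2 = 0 := by
    have h2 : 2 * (1 - p) * sHat p = -3 * p ^ 2 + q := by
      rw [hs]; field_simp
    have h3 : (2 * (1 - p) * sHat p + 3 * p ^ 2) ^ 2 = q ^ 2 := by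
      rw [h2]; ring
    rw [hq2] at h3
    have h4 : 4 * (1 - p) * ((1 - p) * sHat p ^ 2 + 3 * p ^ 2 * sHat p - p ^ 2) = 0 := by
      nlinarith [h3]
    have h5 : (1 : ℝ) - p > 0 := by linarith
    nlinarith [h4]
  refine ⟨⟨hs0, hs3⟩, ?_⟩
  unfold u₂ u₃
  field_simp
  ring_nf
  ring_nf at hkey
  nlinarith [hkey, sq_nonneg (sHat p)]
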